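/- Let k ≥ 2, r ≥ 1 and set d = 2k−1. The (d×d) integer matrix A with block structure: top-left (k−1)×(k−1) identity, top-middle (k−1)×(k−1) block all entries −r, top-right column all −r; middle-left block zero, middle (k−1)×(k−1) block equal to (−r)·J + I where J is the all-ones matrix (i.e., diagonal entries −r+1, off-diagonal −r), middle-right column all −r; bottom row (0,...,0, (k−1)r, ..., (k−1)r, (k−1)r+1) with k−1 zeros and k−1 entries (k−1)r — has determinant ±1 (is unimodular). -/

import Mathlib

lemma sum_ite_range_aux (n m : ℕ) (c : ℤ) :
    ∑ j ∈ Finset.range n, (if j < m then (0:ℤ) else c) = (n - m : ℕ) * c := by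
  induction n with
  | zero => simp
  | succ n ih =>
    rw [Finset.sum_range_succ, ih]
    by_cases h : n < m
    · simp [h, Nat.sub_eq_zero_of_le h, Nat.sub_eq_zero_of_le (Nat.le_of_lt h)]
    · rw [if_neg h]
      push_cast [Nat.succ_sub (Nat.le_of_not_lt h), Nat.sub_add_cancel] at *
      ring

/-- The `d × d` integer matrix (`d = 2k - 1`) with block structure: top-left `(k-1)×(k-1)`
identity, top-middle block all `-r`, top-right column `-r`; middle-left block zero, middle
`(k-1)×(k-1)` block with diagonal `-r+1` and off-diagonal `-r`, middle-right column `-r`;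
bottom row `(0,…,0,(k-1)r,…,(k-1)r,(k-1)r+1)` — is unimodular (determinant `±1`). -/
theorem reeve_embedding_matrix_unimodular (k r : ℕ) (hk : 2 ≤ k) (hr : 1 ≤ r) :
    let d := 2 * k - 1
    let A : Matrix (Fin d) (Fin d) ℤ := Matrix.of fun i j =>
      if (i : ℕ) < k - 1 then
        (if (j : ℕ) < k - 1 then (if i = j then 1 else 0) else -(r : ℤ))
      else if (i : ℕ) < d - 1 then
        (if (j : ℕ) < k - 1 then 0
         else if (j : ℕ) < d - 1 then (if i = j then -(r : ℤ) + 1 else -(r : ℤ))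
         else -(r : ℤ))
      else
        (if (j : ℕ) < k - 1 then 0
         else if (j : ℕ) < d - 1 then ((k : ℤ) - 1) * r
         else ((k : ℤ) - 1) * r + 1)
    A.det = 1 ∨ A.det = -1 := by
  intro d A
  left
  set u : Fin d → ℤ := fun i => if (i : ℕ) < d - 1 then -(r:ℤ) else ((k:ℤ)-1) * r with hu
  set v : Fin d → ℤ := fun j => if (j : ℕ) < k - 1 then 0 else 1 with hv
  have hA : A = 1 + Matrix.replicateCol (Fin 1) u * Matrix.replicateRow (Fin 1) v := by
    ext i j
    have hd : d = 2 * k - 1 := rfl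
    have hi := i.isLt
    have hj := j.isLt
    simp only [A, Matrix.of_apply, Matrix.add_apply, Matrix.mul_apply, Matrix.replicateCol_apply,
      Matrix.replicateRow_apply, Finset.sum_const, Finset.card_univ, Fintype.card_fin, one_smul,
      Matrix.one_apply, hu, hv]
    have hij : i = j ↔ (i:ℕ) = (j:ℕ) := Fin.ext_iff
    split_ifs <;> simp_all <;> omega
  rw [hA]; refine (Matrix.det_one_add_replicateCol_mul_replicateRow (ι := Fin 1) u v).trans ?_
  have : dotProduct v u = 0 := by
    simp only [dotProduct, hu, hv]
    have hd : d = (2 * k - 2) + 1 := by omega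
    rw [Fin.sum_univ_eq_sum_range (fun j : ℕ => (if j < k - 1 then (0:ℤ) else 1) *
        (if j < d - 1 then -(r:ℤ) else ((k:ℤ)-1) * r)) d]
    have : ∀ j ∈ Finset.range d, ((if j < k - 1 then (0:ℤ) else 1) *
        (if j < d - 1 then -(r:ℤ) else ((k:ℤ)-1) * r)) =
        (if j < k - 1 then (0:ℤ) else if j < d - 1 then -(r:ℤ) else ((k:ℤ)-1) * r) := by
      intro j hj; split_ifs <;> ring
    rw [Finset.sum_congr rfl this, hd, Finset.sum_range_succ]
    simp only [Nat.add_sub_cancel]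
    have h1 : ∀ j ∈ Finset.range (2 * k - 2),
        (if j < k - 1 then (0:ℤ) else if j < 2 * k - 2 then -(r:ℤ) else ((k:ℤ)-1) * r) =
        (if j < k - 1 then (0:ℤ) else -(r:ℤ)) := by
      intro j hj
      simp only [Finset.mem_range] at hj
      split_ifs <;> first | rfl | omega
    rw [Finset.sum_congr rfl h1, sum_ite_range_aux]
    have h2 : ¬ (2 * k - 2 < k - 1) := by omega
    have h3 : ¬ (2 * k - 2 < 2 * k - 2) := by omega
    rw [if_neg h2, if_neg h3]
    have : (2 * k - 2 - (k - 1) : ℕ) = k - 1 := by omega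
    rw [this]
    have : ((k - 1 : ℕ) : ℤ) = (k:ℤ) - 1 := by omega
    rw [this]; ring
  rw [this, add_zero]
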